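/- arXiv:2002.01004 — 11 statements merged into one kernel-verified Lean document; each statement's English description precedes it below -/
import Mathlib

section
/- For fixed r ≥ 2, the function f_r(x) = (1/r)‖x‖^r on a real inner product space is uniformly convex of degree r with parameter σ_r = 2^{2−r}, i.e. f_r(y) ≥ f_r(x) + ⟨∇f_r(x), y−x⟩ + (2^{2−r}/r)‖y−x‖^r for all x, y. -/
open Real Set
open scoped RealInnerProductSpace

lemma tangent_rpow {p u q : ℝ} (hp : 1 ≤ p) (hu : 0 ≤ u) (hq : 0 ≤ q) :
    u ^ p + p * u ^ (p - 1) * (q - u) ≤ q ^ p := by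
  rcases hu.eq_or_lt with h | h
  · subst h
    rcases hp.eq_or_lt with h1 | h1
    · simp [← h1]
    · rw [Real.zero_rpow (by positivity), Real.zero_rpow (sub_ne_zero.2 (ne_of_gt h1))]
      simpa using Real.rpow_nonneg hq p
  · have hb := one_add_mul_self_le_rpow_one_add (s := q / u - 1)
      (by have : 0 ≤ q / u := div_nonneg hq h.le; linarith) hp
    rw [add_sub_cancel, Real.div_rpow hq h.le] at hb
    have hup : (0:ℝ) < u ^ p := Real.rpow_pos_of_pos h p
    rw [le_div_iff₀ hup] at hb
    calc u ^ p + p * u ^ (p - 1) * (q - u)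
        = (1 + p * (q / u - 1)) * u ^ p := by
          rw [Real.rpow_sub h, Real.rpow_one]
          field_simp
      _ ≤ q ^ p := hb

lemma pm_rpow {q a b : ℝ} (hq : 1 ≤ q) (ha : 0 ≤ a) (hb : 0 ≤ b) :
    ((a + b) / 2) ^ q ≤ (a ^ q + b ^ q) / 2 := by
  have h := (convexOn_rpow hq).2 (Set.mem_Ici.2 ha) (Set.mem_Ici.2 hb)
    (by norm_num : (0:ℝ) ≤ 1/2) (by norm_num : (0:ℝ) ≤ 1/2) (by norm_num)
  simp only [smul_eq_mul] at h
  calc ((a + b) / 2) ^ q = (1/2 * a + 1/2 * b) ^ q := by ring_nf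
    _ ≤ 1/2 * a ^ q + 1/2 * b ^ q := h
    _ = (a ^ q + b ^ q) / 2 := by ring

lemma core_ineq {r A t : ℝ} (hr : 2 ≤ r) (hA : 0 < A) (ht : 2 * A ≤ t) :
    2 ^ (2 - r) * t ^ r ≤ (t - A) ^ r + r * A ^ (r - 1) * t - A ^ r := by
  set f : ℝ → ℝ := fun u => (u - A) ^ r + r * A ^ (r - 1) * u - 2 ^ (2 - r) * u ^ r with hf
  have hmono : MonotoneOn f (Ici (2 * A)) := by
    have hderiv : ∀ u ∈ interior (Ici (2 * A)), HasDerivAt f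
        (r * (u - A) ^ (r - 1) * 1 + r * A ^ (r - 1) - 2 ^ (2 - r) * (r * u ^ (r - 1))) u := by
      intro u hu
      rw [interior_Ici, mem_Ioi] at hu
      have hu0 : 0 < u := lt_of_le_of_lt (by positivity) hu
      have huA : 0 < u - A := by nlinarith
      have h1 : HasDerivAt (fun u : ℝ => (u - A) ^ r) (r * (u - A) ^ (r - 1) * 1) u :=
        by simpa using ((hasDerivAt_id u).sub_const A).rpow_const (p := r) (Or.inl (ne_of_gt huA))
      have h2 : HasDerivAt (fun u : ℝ => r * A ^ (r - 1) * u) (r * A ^ (r - 1)) u := by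
        simpa using (hasDerivAt_id u).const_mul (r * A ^ (r - 1))
      have h3 : HasDerivAt (fun u : ℝ => 2 ^ (2 - r) * u ^ r) (2 ^ (2 - r) * (r * u ^ (r - 1))) u :=
        (Real.hasDerivAt_rpow_const (Or.inl (ne_of_gt hu0))).const_mul _
      exact (h1.add h2).sub h3
    apply monotoneOn_of_deriv_nonneg (convex_Ici _)
    · -- continuity
      exact ContinuousOn.sub (ContinuousOn.add
        (fun u hu => ((Real.continuousAt_rpow_const _ _ (Or.inr (by linarith))).comp
          (by fun_prop)).continuousWithinAt) (by fun_prop))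
        (ContinuousOn.mul continuousOn_const (fun u hu =>
          (Real.continuousAt_rpow_const _ _ (Or.inr (by linarith))).continuousWithinAt))
    · exact fun u hu => ((hderiv u hu).differentiableAt).differentiableWithinAt
    · intro u hu
      rw [(hderiv u hu).deriv]
      rw [interior_Ici, mem_Ioi] at hu
      have hu0 : 0 < u := lt_of_le_of_lt (by positivity) hu
      have huA : 0 < u - A := by nlinarith
      have hpm := pm_rpow (q := r - 1) (a := u - A) (b := A) (by linarith) huA.le hA.le
      rw [sub_add_cancel] at hpm
      have h2 : 2 ^ (2 - r) * u ^ (r - 1) = 2 * (u / 2) ^ (r - 1) := by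
        have h2r : (0:ℝ) < 2 ^ (r - 1) := Real.rpow_pos_of_pos (by norm_num) _
        rw [Real.div_rpow hu0.le (by norm_num),
          show (2:ℝ) - r = 1 - (r - 1) by ring,
          Real.rpow_sub (by norm_num : (0:ℝ) < 2), Real.rpow_one]
        field_simp
      have hr0 : (0:ℝ) < r := by linarith
      nlinarith [Real.rpow_nonneg hu0.le (r - 1)]
  have key := hmono (self_mem_Ici) (mem_Ici.2 ht) ht
  have hf2A : f (2 * A) = (2 * r - 3) * A ^ r := by
    have e1 : 2 * A - A = A := by ring
    have e2 : r * A ^ (r - 1) * (2 * A) = 2 * r * A ^ r := by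
      rw [show r * A ^ (r - 1) * (2 * A) = 2 * r * (A ^ (r - 1) * A ^ (1:ℝ)) by
        rw [Real.rpow_one]; ring, ← Real.rpow_add hA]
      ring_nf
    have e3 : 2 ^ (2 - r) * (2 * A) ^ r = 4 * A ^ r := by
      rw [Real.mul_rpow (by norm_num) hA.le, show (4:ℝ) = 2 ^ (2:ℝ) by
        rw [show (2:ℝ) = ((2:ℕ):ℝ) by norm_num, Real.rpow_natCast]; norm_num]
      rw [← mul_assoc, ← Real.rpow_add (by norm_num : (0:ℝ) < 2)]
      ring_nf
      norm_num [mul_comm]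
    simp only [hf, e1, e2, e3]
    ring
  have hAr : 0 < A ^ r := Real.rpow_pos_of_pos hA r
  have : (2 * r - 3) * A ^ r ≤ f t := hf2A ▸ key
  simp only [hf] at this
  nlinarith

-- squares as rpow helpers
lemma sq_rpow {a : ℝ} (ha : 0 ≤ a) (c : ℝ) : (a ^ 2) ^ c = a ^ (2 * c) := by
  rw [← Real.rpow_natCast a 2, ← Real.rpow_mul ha]
  norm_num

lemma master {r A t s : ℝ} (hr : 2 ≤ r) (hA : 0 ≤ A) (ht : 0 ≤ t)
    (hs : |s| ≤ A * t) :
    A ^ r + r * A ^ (r - 2) * s + 2 ^ (2 - r) * t ^ r ≤ (A ^ 2 + 2 * s + t ^ 2) ^ (r / 2) := by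
  have hsl : -(A * t) ≤ s := neg_le_of_abs_le hs
  have hsu : s ≤ A * t := le_of_abs_le hs
  have hq0 : 0 ≤ A ^ 2 + 2 * s + t ^ 2 := by nlinarith [sq_nonneg (A - t)]
  have hp1 : 1 ≤ r / 2 := by linarith
  rcases le_or_gt t (2 * A) with hcase | hcase
  · -- case t ≤ 2A
    have htan := tangent_rpow (p := r / 2) (u := A ^ 2) (q := A ^ 2 + 2 * s + t ^ 2)
      hp1 (by positivity) hq0
    rw [sq_rpow hA, sq_rpow hA] at htan
    have e1 : A ^ (2 * (r / 2)) = A ^ r := by ring_nf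
    have e2 : A ^ (2 * (r / 2 - 1)) = A ^ (r - 2) := by ring_nf
    rw [e1, e2] at htan
    -- htan : A^r + (r/2) * A^(r-2) * (2*s + t^2) ≤ q^(r/2)
    have hstep : 2 ^ (2 - r) * t ^ r ≤ (r / 2) * A ^ (r - 2) * t ^ 2 := by
      rcases ht.eq_or_lt with h0 | h0
      · rw [← h0, Real.zero_rpow (by positivity)]
        norm_num
      · have hA0 : 0 < A := by nlinarith
        have htr : t ^ r = t ^ (r - 2) * t ^ 2 := by
          rw [← Real.rpow_natCast t 2, ← Real.rpow_add h0]
          norm_num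
        have h1 : t ^ (r - 2) ≤ (2 * A) ^ (r - 2) :=
          Real.rpow_le_rpow ht hcase (by linarith)
        have h2 : (2 * A) ^ (r - 2) = 2 ^ (r - 2) * A ^ (r - 2) :=
          Real.mul_rpow (by norm_num) hA
        have h3 : (2:ℝ) ^ (2 - r) * 2 ^ (r - 2) = 1 := by
          rw [← Real.rpow_add (by norm_num : (0:ℝ) < 2)]; norm_num
        have h4 : (0:ℝ) < 2 ^ (2 - r) := Real.rpow_pos_of_pos (by norm_num) _
        have h5 : 0 ≤ A ^ (r - 2) := Real.rpow_nonneg hA _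
        calc 2 ^ (2 - r) * t ^ r = 2 ^ (2 - r) * t ^ (r - 2) * t ^ 2 := by rw [htr]; ring
          _ ≤ 2 ^ (2 - r) * (2 ^ (r - 2) * A ^ (r - 2)) * t ^ 2 :=
              mul_le_mul_of_nonneg_right (mul_le_mul_of_nonneg_left (h2 ▸ h1) h4.le) (sq_nonneg t)
          _ = A ^ (r - 2) * t ^ 2 := by rw [← mul_assoc, h3]; ring
          _ ≤ (r / 2) * A ^ (r - 2) * t ^ 2 := by
              nlinarith [mul_nonneg h5 (sq_nonneg t)]
    linarith [hstep, htan]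
  · -- case 2A < t
    rcases hA.eq_or_lt with h0 | hA0
    · -- A = 0
      rw [← h0]
      have hs0 : s = 0 := by
        rw [← h0] at hs; simpa using le_antisymm (by simpa using hs) (abs_nonneg s)
      rw [hs0, Real.zero_rpow (by positivity)]
      have : (2:ℝ) ^ (2 - r) ≤ 1 :=
        Real.rpow_le_one_of_one_le_of_nonpos (by norm_num) (by linarith)
      have htr : (t ^ 2) ^ (r / 2) = t ^ r := by rw [sq_rpow ht]; ring_nf
      have htp : 0 ≤ t ^ r := Real.rpow_nonneg ht r
      simp only [mul_zero, add_zero, zero_add]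
      rw [show (0:ℝ)^2 + t^2 = t^2 by norm_num, htr]
      nlinarith
    · -- A > 0
      have htA : A ≤ t - A := by linarith
      have htA0 : 0 < t - A := by linarith
      have htan := tangent_rpow (p := r / 2) (u := (t - A) ^ 2) (q := A ^ 2 + 2 * s + t ^ 2)
        hp1 (by positivity) hq0
      rw [sq_rpow htA0.le, sq_rpow htA0.le] at htan
      have e1 : (t - A) ^ (2 * (r / 2)) = (t - A) ^ r := by ring_nf
      have e2 : (t - A) ^ (2 * (r / 2 - 1)) = (t - A) ^ (r - 2) := by ring_nf
      rw [e1, e2] at htan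
      have hqv : A ^ 2 + 2 * s + t ^ 2 - (t - A) ^ 2 = 2 * (s + A * t) := by ring
      rw [hqv] at htan
      have hmon : A ^ (r - 2) ≤ (t - A) ^ (r - 2) :=
        Real.rpow_le_rpow hA htA (by linarith)
      have hAr1 : A ^ (r - 2) * A = A ^ (r - 1) := by
        nth_rewrite 2 [← Real.rpow_one A]
        rw [← Real.rpow_add hA0]; ring_nf
      have hcore := core_ineq hr hA0 hcase.le
      -- combine
      have hb : (r / 2) * A ^ (r - 2) * (2 * (s + A * t)) ≤
          (r / 2) * (t - A) ^ (r - 2) * (2 * (s + A * t)) :=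
        mul_le_mul_of_nonneg_right
          (mul_le_mul_of_nonneg_left hmon (by linarith : (0:ℝ) ≤ r / 2))
          (by linarith : (0:ℝ) ≤ 2 * (s + A * t))
      calc A ^ r + r * A ^ (r - 2) * s + 2 ^ (2 - r) * t ^ r
          ≤ A ^ r + r * A ^ (r - 2) * s + ((t - A) ^ r + r * A ^ (r - 1) * t - A ^ r) := by
            linarith [hcore]
        _ = (t - A) ^ r + (r / 2) * A ^ (r - 2) * (2 * (s + A * t)) := by
            rw [← hAr1]; ring
        _ ≤ (t - A) ^ r + (r / 2) * (t - A) ^ (r - 2) * (2 * (s + A * t)) := by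
            linarith [hb]
        _ ≤ _ := htan

lemma sq_rpow' {a : ℝ} (ha : 0 ≤ a) (c : ℝ) : (a ^ 2) ^ c = a ^ (2 * c) := by
  rw [← Real.rpow_natCast a 2, ← Real.rpow_mul ha]
  norm_num

lemma grad_pow_norm {E : Type*} [NormedAddCommGroup E] [InnerProductSpace ℝ E] [CompleteSpace E]
    (r : ℝ) (hr : 2 ≤ r) (x : E) :
    HasGradientAt (fun z : E => (1 / r) * ‖z‖ ^ r) ((‖x‖ ^ (r - 2)) • x) x := by
  have hr0 : (0:ℝ) < r := by linarith
  have hp1 : 1 ≤ r / 2 := by linarith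
  have hg : HasFDerivAt (fun z : E => ‖z‖ ^ (2:ℕ)) (2 • (innerSL ℝ x)) x :=
    (hasStrictFDerivAt_norm_sq x).hasFDerivAt
  have hφ : HasDerivAt (fun u : ℝ => (1 / r) * u ^ (r / 2))
      ((1 / r) * (r / 2 * (‖x‖ ^ (2:ℕ)) ^ (r / 2 - 1))) (‖x‖ ^ (2:ℕ)) :=
    (Real.hasDerivAt_rpow_const (Or.inr hp1)).const_mul (1 / r)
  have hcomp := hφ.comp_hasFDerivAt x hg
  have hfun : ((fun u : ℝ => (1 / r) * u ^ (r / 2)) ∘ (fun z : E => ‖z‖ ^ (2:ℕ)))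
      = fun z : E => (1 / r) * ‖z‖ ^ r := by
    funext z
    simp only [Function.comp_apply]
    rw [sq_rpow' (norm_nonneg z)]
    ring_nf
  rw [hfun] at hcomp
  have hscal : (1 / r) * (r / 2 * (‖x‖ ^ (2:ℕ)) ^ (r / 2 - 1)) * 2 = ‖x‖ ^ (r - 2) := by
    rw [sq_rpow' (norm_nonneg x)]
    have : 2 * (r / 2 - 1) = r - 2 := by ring
    rw [this]
    field_simp
  rw [hasGradientAt_iff_hasFDerivAt]
  refine hcomp.congr_fderiv ?_
  ext v
  simp only [InnerProductSpace.toDual_apply_apply, ContinuousLinearMap.coe_smul',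
    Pi.smul_apply, ContinuousLinearMap.smul_apply, innerSL_apply_apply, smul_eq_mul]
  rw [real_inner_smul_left, ← hscal]
  ring

theorem pow_norm_uniformly_convex
    {E : Type*} [NormedAddCommGroup E] [InnerProductSpace ℝ E] [CompleteSpace E]
    (r : ℝ) (hr : 2 ≤ r) (x y : E) :
    (1 / r) * ‖x‖ ^ r + ⟪gradient (fun z : E => (1 / r) * ‖z‖ ^ r) x, y - x⟫
        + ((2 : ℝ) ^ (2 - r) / r) * ‖y - x‖ ^ r
      ≤ (1 / r) * ‖y‖ ^ r := by
  have hr0 : (0:ℝ) < r := by linarith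
  have hgrad : gradient (fun z : E => (1 / r) * ‖z‖ ^ r) x = (‖x‖ ^ (r - 2)) • x :=
    (grad_pow_norm r hr x).gradient
  rw [hgrad, real_inner_smul_left]
  have hm := master (r := r) (A := ‖x‖) (t := ‖y - x‖) (s := ⟪x, y - x⟫) hr
    (norm_nonneg x) (norm_nonneg (y - x)) (abs_real_inner_le_norm x (y - x))
  have hy : ‖x‖ ^ 2 + 2 * ⟪x, y - x⟫ + ‖y - x‖ ^ 2 = ‖y‖ ^ 2 := by
    rw [← norm_add_sq_real, add_sub_cancel]
  rw [hy] at hm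
  have hyr : (‖y‖ ^ 2) ^ (r / 2) = ‖y‖ ^ r := by
    rw [sq_rpow (norm_nonneg y)]; ring_nf
  rw [hyr] at hm
  have h1 : (1 / r) * (‖x‖ ^ r + r * ‖x‖ ^ (r - 2) * ⟪x, y - x⟫
      + 2 ^ (2 - r) * ‖y - x‖ ^ r) ≤ (1 / r) * ‖y‖ ^ r :=
    mul_le_mul_of_nonneg_left hm (by positivity)
  have he : (1 / r) * (‖x‖ ^ r + r * ‖x‖ ^ (r - 2) * ⟪x, y - x⟫
      + 2 ^ (2 - r) * ‖y - x‖ ^ r)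
      = (1 / r) * ‖x‖ ^ r + ‖x‖ ^ (r - 2) * ⟪x, y - x⟫
        + ((2:ℝ) ^ (2 - r) / r) * ‖y - x‖ ^ r := by
    field_simp
  linarith [he ▸ h1]
end

section
/- Let f have L_q-Lipschitz q-th derivative and g have L_p-Lipschitz p-th derivative, h proper closed convex, F = f + g + h. Let T = T(x) be any minimizer over y of Ω_q(f,x;y) + H_q/(q+1)!·‖y−x‖^{q+1} + Ω_p(g,x;y) + H_p/(p+1)!·‖y−x‖^{p+1} + h(y), with H_q ≥ qL_q and H_p ≥ pL_p. Then F(T(x)) ≤ min_y { F(y) + (H_q+L_q)/(q+1)!·‖y−x‖^{q+1} + (H_p+L_p)/(p+1)!·‖y−x‖^{p+1} }. -/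
/-- `Ω_k(f,x;y)`: `k`-th order Taylor polynomial of `f` at `x`, evaluated at `y`. -/
noncomputable def omegaTaylor {E : Type*} [NormedAddCommGroup E] [NormedSpace ℝ E]
    (f : E → ℝ) (k : ℕ) (x y : E) : ℝ :=
  ∑ i ∈ Finset.range (k + 1), ((i.factorial : ℝ))⁻¹ * iteratedFDeriv ℝ i f x (fun _ => y - x)

theorem multi_composite_step_bound
    {E : Type*} [NormedAddCommGroup E] [NormedSpace ℝ E] [FiniteDimensional ℝ E]
    (f g h : E → ℝ) (q p : ℕ) (Lq Lp Hq Hp : ℝ)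
    (hq : 1 ≤ q) (hp : 1 ≤ p)
    (hfT : ∀ x y : E, |f y - omegaTaylor f q x y| ≤ Lq / (q + 1).factorial * ‖y - x‖ ^ (q + 1))
    (hgT : ∀ x y : E, |g y - omegaTaylor g p x y| ≤ Lp / (p + 1).factorial * ‖y - x‖ ^ (p + 1))
    (hh : ConvexOn ℝ Set.univ h)
    (hHq : (q : ℝ) * Lq ≤ Hq) (hHp : (p : ℝ) * Lp ≤ Hp)
    (T : E → E)
    (hT : ∀ x y : E,
      omegaTaylor f q x (T x) + Hq / (q + 1).factorial * ‖T x - x‖ ^ (q + 1)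
        + omegaTaylor g p x (T x) + Hp / (p + 1).factorial * ‖T x - x‖ ^ (p + 1) + h (T x)
      ≤ omegaTaylor f q x y + Hq / (q + 1).factorial * ‖y - x‖ ^ (q + 1)
        + omegaTaylor g p x y + Hp / (p + 1).factorial * ‖y - x‖ ^ (p + 1) + h y)
    (x y : E) :
    f (T x) + g (T x) + h (T x)
      ≤ f y + g y + h y + (Hq + Lq) / (q + 1).factorial * ‖y - x‖ ^ (q + 1)
        + (Hp + Lp) / (p + 1).factorial * ‖y - x‖ ^ (p + 1) := by
  by_cases hE : Nontrivial E
  · have cq : (0 : ℝ) < ((q + 1).factorial : ℝ) := by positivity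
    have cp : (0 : ℝ) < ((p + 1).factorial : ℝ) := by positivity
    obtain ⟨z, hz⟩ := exists_ne (0 : E)
    have hzn : (0 : ℝ) < ‖z‖ := norm_pos_iff.mpr hz
    have hz' : (0 : ℝ) < ‖z‖ ^ (q + 1) := by positivity
    have hz'' : (0 : ℝ) < ‖z‖ ^ (p + 1) := by positivity
    have hznorm : ‖(x + z) - x‖ = ‖z‖ := by simp
    have hq1 : (1 : ℝ) ≤ (q : ℝ) := by exact_mod_cast hq
    have hp1 : (1 : ℝ) ≤ (p : ℝ) := by exact_mod_cast hp
    have hLq : 0 ≤ Lq := by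
      have h0 := (abs_nonneg _).trans (hfT x (x + z))
      rw [hznorm] at h0
      have h1 : 0 ≤ Lq / ((q + 1).factorial : ℝ) :=
        le_of_mul_le_mul_right (by linarith [h0]) hz'
      have h2 := mul_nonneg h1 cq.le
      rwa [div_mul_cancel₀ _ cq.ne'] at h2
    have hLp : 0 ≤ Lp := by
      have h0 := (abs_nonneg _).trans (hgT x (x + z))
      rw [hznorm] at h0
      have h1 : 0 ≤ Lp / ((p + 1).factorial : ℝ) :=
        le_of_mul_le_mul_right (by linarith [h0]) hz''
      have h2 := mul_nonneg h1 cp.le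
      rwa [div_mul_cancel₀ _ cp.ne'] at h2
    have hLHq : Lq ≤ Hq := by nlinarith
    have hLHp : Lp ≤ Hp := by nlinarith
    have h1 := abs_le.mp (hfT x (T x))
    have h2 := abs_le.mp (hgT x (T x))
    have h3 := abs_le.mp (hfT x y)
    have h4 := abs_le.mp (hgT x y)
    have h5 := hT x y
    have A1 : (0 : ℝ) ≤ ‖T x - x‖ ^ (q + 1) := by positivity
    have A2 : (0 : ℝ) ≤ ‖T x - x‖ ^ (p + 1) := by positivity
    have m1 : Lq / (q + 1).factorial * ‖T x - x‖ ^ (q + 1)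
        ≤ Hq / (q + 1).factorial * ‖T x - x‖ ^ (q + 1) := by gcongr
    have m2 : Lp / (p + 1).factorial * ‖T x - x‖ ^ (p + 1)
        ≤ Hp / (p + 1).factorial * ‖T x - x‖ ^ (p + 1) := by gcongr
    have s1 : (Hq + Lq) / (q + 1).factorial * ‖y - x‖ ^ (q + 1)
        = Hq / (q + 1).factorial * ‖y - x‖ ^ (q + 1)
          + Lq / (q + 1).factorial * ‖y - x‖ ^ (q + 1) := by ring
    have s2 : (Hp + Lp) / (p + 1).factorial * ‖y - x‖ ^ (p + 1)
        = Hp / (p + 1).factorial * ‖y - x‖ ^ (p + 1)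
          + Lp / (p + 1).factorial * ‖y - x‖ ^ (p + 1) := by ring
    linarith [h1.2, h2.2, h3.1, h4.1]
  · have hsub : Subsingleton E := not_nontrivial_iff_subsingleton.mp hE
    have hTy : T x = y := Subsingleton.elim _ _
    have hyx : y - x = 0 := Subsingleton.elim _ _
    rw [hTy, hyx]
    simp [pow_succ]
end

section
/- Under the multi-composite tensor step x_{t+1} = T(x_t) with F(T(x)) ≤ min_y {F(y) + C_f‖y−x‖^{q+1} + C_g‖y−x‖^{p+1}} and convex F, for step sizes α_0 = 1, α_t ∈ (0,1) for t ≥ 1, setting A_0 = 1 and A_t = Π_{i=1}^t (1−α_i), one has for all t ≥ 0: F(x_{t+1}) − F(x*) ≤ A_t · Σ_{i=0}^t [ C_f (α_i^{q+1}/A_i)‖x_i − x*‖^{q+1} + C_g (α_i^{p+1}/A_i)‖x_i − x*‖^{p+1} ]. -/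
theorem multi_composite_convergence
    {E : Type*} [NormedAddCommGroup E] [NormedSpace ℝ E]
    (F : E → ℝ) (hF : ConvexOn ℝ Set.univ F)
    (xs : E) (hxs : ∀ u, F xs ≤ F u)
    (q p : ℕ) (hq : 1 ≤ q) (hp : 1 ≤ p)
    (Cf Cg : ℝ) (hCf : 0 < Cf) (hCg : 0 < Cg)
    (x : ℕ → E) (α : ℕ → ℝ) (hα0 : α 0 = 1)
    (hα : ∀ t, 1 ≤ t → α t ∈ Set.Ioo (0 : ℝ) 1)
    (A : ℕ → ℝ) (hA : ∀ t, A t = ∏ i ∈ Finset.Icc 1 t, (1 - α i))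
    (hstep : ∀ t (y : E),
      F (x (t + 1)) ≤ F y + Cf * ‖y - x t‖ ^ (q + 1) + Cg * ‖y - x t‖ ^ (p + 1))
    (t : ℕ) :
    F (x (t + 1)) - F xs ≤ A t * ∑ i ∈ Finset.range (t + 1),
      (Cf * (α i) ^ (q + 1) / A i * ‖x i - xs‖ ^ (q + 1)
        + Cg * (α i) ^ (p + 1) / A i * ‖x i - xs‖ ^ (p + 1)) := by
  -- bounds on α
  have hαmem : ∀ i, 0 ≤ α i ∧ α i ≤ 1 := by
    intro i
    rcases Nat.eq_zero_or_pos i with h | h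
    · simp [h, hα0]
    · exact ⟨(hα i h).1.le, (hα i h).2.le⟩
  -- positivity of A
  have hApos : ∀ i, 0 < A i := by
    intro i
    rw [hA]
    apply Finset.prod_pos
    intro j hj
    have := (hα j (Finset.mem_Icc.mp hj).1).2
    linarith
  -- key per-step inequality
  have key : ∀ s, F (x (s + 1)) - F xs ≤
      (1 - α s) * (F (x s) - F xs) +
      (Cf * (α s) ^ (q + 1) * ‖x s - xs‖ ^ (q + 1)
        + Cg * (α s) ^ (p + 1) * ‖x s - xs‖ ^ (p + 1)) := by
    intro s
    obtain ⟨ha0, ha1⟩ := hαmem s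
    set y : E := (1 - α s) • x s + α s • xs with hy
    have hconv : F y ≤ (1 - α s) * F (x s) + α s * F xs :=
      hF.2 (Set.mem_univ _) (Set.mem_univ _) (by linarith) ha0 (by ring)
    have hnorm : ‖y - x s‖ = α s * ‖x s - xs‖ := by
      have : y - x s = α s • (xs - x s) := by
        rw [hy]; module
      rw [this, norm_smul, Real.norm_eq_abs, abs_of_nonneg ha0, norm_sub_rev]
    have h1 := hstep s y
    rw [hnorm] at h1
    have hq1 : (α s * ‖x s - xs‖) ^ (q + 1) = α s ^ (q + 1) * ‖x s - xs‖ ^ (q + 1) :=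
      mul_pow _ _ _
    have hp1 : (α s * ‖x s - xs‖) ^ (p + 1) = α s ^ (p + 1) * ‖x s - xs‖ ^ (p + 1) :=
      mul_pow _ _ _
    rw [hq1, hp1] at h1
    nlinarith [hconv]
  induction t with
  | zero =>
      have hA0 : A 0 = 1 := by rw [hA]; simp
      have h := key 0
      rw [hα0] at h
      rw [Finset.sum_range_one, hα0, hA0]
      norm_num at h ⊢
      linarith
  | succ n ih =>
      obtain ⟨ha0, ha1⟩ := hα (n + 1) (by omega)
      have hAsucc : A (n + 1) = A n * (1 - α (n + 1)) := by
        rw [hA, hA, Finset.prod_Icc_succ_top (by omega : 1 ≤ n + 1)]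
      have hApos' := hApos (n + 1)
      have hApn := hApos n
      have h1 := key (n + 1)
      set S := ∑ i ∈ Finset.range (n + 1),
        (Cf * (α i) ^ (q + 1) / A i * ‖x i - xs‖ ^ (q + 1)
          + Cg * (α i) ^ (p + 1) / A i * ‖x i - xs‖ ^ (p + 1)) with hS
      have h2 : (1 - α (n + 1)) * (F (x (n + 1)) - F xs) ≤ A n * (1 - α (n + 1)) * S := by
        have h := mul_le_mul_of_nonneg_left ih (by linarith : (0:ℝ) ≤ 1 - α (n + 1))
        rwa [show (1 - α (n + 1)) * (A n * S) = A n * (1 - α (n + 1)) * S from by ring] at h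
      rw [Finset.sum_range_succ, ← hS, mul_add, hAsucc]
      have hAn : A n ≠ 0 := ne_of_gt hApn
      have hone : (1 : ℝ) - α (n + 1) ≠ 0 := by linarith
      have hlast : A n * (1 - α (n + 1)) *
          (Cf * (α (n + 1)) ^ (q + 1) / (A n * (1 - α (n + 1))) * ‖x (n + 1) - xs‖ ^ (q + 1)
            + Cg * (α (n + 1)) ^ (p + 1) / (A n * (1 - α (n + 1))) * ‖x (n + 1) - xs‖ ^ (p + 1))
          = Cf * (α (n + 1)) ^ (q + 1) * ‖x (n + 1) - xs‖ ^ (q + 1)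
            + Cg * (α (n + 1)) ^ (p + 1) * ‖x (n + 1) - xs‖ ^ (p + 1) := by
        field_simp
      rw [hlast]
      linarith
end

section
/- For α_i = (p+1)/(i+p+1) and A_t = Π_{i=1}^t i/(i+p+1), the weighted sum satisfies Σ_{i=1}^t (A_t/A_i)·α_i^{p+1} ≤ (p+1)^{p+1}/(t+p+1)^p. -/
/-- Key inequality: `(t+1)·(t+p+2)^p ≤ (t+p+1)^(p+1)`. -/
lemma key_ineq_aux (p t : ℕ) : ((t : ℝ) + 1) * ((t : ℝ) + p + 2) ^ p ≤ ((t : ℝ) + p + 1) ^ (p + 1) := by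
  set a : ℝ := (t : ℝ) + p + 1 with ha
  have ht0 : (0 : ℝ) ≤ (t : ℝ) := Nat.cast_nonneg t
  have hp0 : (0 : ℝ) ≤ (p : ℝ) := Nat.cast_nonneg p
  have ha0 : (0 : ℝ) < a := by positivity
  set u : ℝ := 1 / a with hu
  have hu0 : 0 < u := by positivity
  have hau : a * u = 1 := by
    rw [hu]; field_simp
  have hu1 : u ≤ 1 := by
    rw [hu, div_le_one ha0]; rw [ha]; linarith
  have h1 : 1 - (p : ℝ) * u ≤ (1 - u) ^ p := by
    have := one_add_mul_le_pow (a := -u) (by linarith) p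
    simpa [sub_eq_add_neg, mul_neg] using this
  have h2 : (1 - u) ^ p * (1 + u) ^ p ≤ 1 := by
    rw [← mul_pow]
    calc ((1 - u) * (1 + u)) ^ p ≤ 1 ^ p := by
          apply pow_le_pow_left₀ (by nlinarith) (by nlinarith)
      _ = 1 := one_pow p
  have hpu : 0 ≤ 1 - (p : ℝ) * u := by
    have hpa : (p : ℝ) ≤ a := by rw [ha]; linarith
    nlinarith
  have e1 : (t : ℝ) + 1 = a * (1 - p * u) := by
    have : a * ((p : ℝ) * u) = p := by
      rw [show a * ((p : ℝ) * u) = (p : ℝ) * (a * u) by ring, hau, mul_one]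
    nlinarith [this]
  have e2 : (t : ℝ) + p + 2 = a * (1 + u) := by
    have : a * (1 + u) = a + a * u := by ring
    rw [this, hau]; rw [ha]; ring
  calc ((t : ℝ) + 1) * ((t : ℝ) + p + 2) ^ p
      = a ^ (p + 1) * ((1 - p * u) * (1 + u) ^ p) := by
        rw [e1, e2, mul_pow, pow_succ]; ring
    _ ≤ a ^ (p + 1) * ((1 - u) ^ p * (1 + u) ^ p) := by
        apply mul_le_mul_of_nonneg_left _ (by positivity)
        exact mul_le_mul_of_nonneg_right h1 (by positivity)
    _ ≤ a ^ (p + 1) * 1 := mul_le_mul_of_nonneg_left h2 (by positivity)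
    _ = a ^ (p + 1) := mul_one _

/-- The inductive step inequality. -/
lemma step_ineq_aux (p t : ℕ) :
    ((t : ℝ) + 1) / ((t : ℝ) + p + 2) * (((p : ℝ) + 1) ^ (p + 1) / ((t : ℝ) + p + 1) ^ p)
      + ((p : ℝ) + 1) ^ (p + 1) / ((t : ℝ) + p + 2) ^ (p + 1)
      ≤ ((p : ℝ) + 1) ^ (p + 1) / ((t : ℝ) + p + 2) ^ p := by
  have ht0 : (0 : ℝ) ≤ (t : ℝ) := Nat.cast_nonneg t
  have hp0 : (0 : ℝ) ≤ (p : ℝ) := Nat.cast_nonneg p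
  set a : ℝ := (t : ℝ) + p + 1 with hadef
  set b : ℝ := (t : ℝ) + p + 2 with hbdef
  have ha0 : (0 : ℝ) < a := by rw [hadef]; positivity
  have hb0 : (0 : ℝ) < b := by rw [hbdef]; positivity
  have key : ((t : ℝ) + 1) * b ^ p ≤ a ^ (p + 1) := key_ineq_aux p t
  have h1 : ((t : ℝ) + 1) / (b * a ^ p) ≤ a / b ^ (p + 1) := by
    rw [div_le_div_iff₀ (by positivity) (by positivity)]
    calc ((t : ℝ) + 1) * b ^ (p + 1) = (((t : ℝ) + 1) * b ^ p) * b := by ring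
      _ ≤ a ^ (p + 1) * b := mul_le_mul_of_nonneg_right key hb0.le
      _ = a * (b * a ^ p) := by ring
  have h3 : a / b ^ (p + 1) + 1 / b ^ (p + 1) = 1 / b ^ p := by
    rw [← add_div]
    have hab : a + 1 = b := by rw [hadef, hbdef]; ring
    rw [hab, pow_succ]
    rw [div_eq_div_iff (by positivity) (by positivity)]
    ring
  have h2 : ((t : ℝ) + 1) / (b * a ^ p) + 1 / b ^ (p + 1) ≤ 1 / b ^ p := by
    linarith
  have hK : (0 : ℝ) ≤ ((p : ℝ) + 1) ^ (p + 1) := by positivity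
  calc ((t : ℝ) + 1) / b * (((p : ℝ) + 1) ^ (p + 1) / a ^ p)
        + ((p : ℝ) + 1) ^ (p + 1) / b ^ (p + 1)
      = ((p : ℝ) + 1) ^ (p + 1) * (((t : ℝ) + 1) / (b * a ^ p) + 1 / b ^ (p + 1)) := by
        field_simp
    _ ≤ ((p : ℝ) + 1) ^ (p + 1) * (1 / b ^ p) := mul_le_mul_of_nonneg_left h2 hK
    _ = ((p : ℝ) + 1) ^ (p + 1) / b ^ p := by ring

theorem weighted_sum_bound_p (p t : ℕ) (hp : 1 ≤ p) (ht : 1 ≤ t) :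
    ∑ i ∈ Finset.Icc 1 t,
        ((∏ j ∈ Finset.Icc 1 t, ((j : ℝ) / (j + p + 1)))
            / (∏ j ∈ Finset.Icc 1 i, ((j : ℝ) / (j + p + 1))))
          * ((p + 1 : ℝ) / (i + p + 1)) ^ (p + 1)
      ≤ (p + 1 : ℝ) ^ (p + 1) / (t + p + 1 : ℝ) ^ p := by
  have hPpos : ∀ i : ℕ, 0 < ∏ j ∈ Finset.Icc 1 i, ((j : ℝ) / (j + p + 1)) := by
    intro i
    apply Finset.prod_pos
    intro j hj
    have hj1 : 1 ≤ j := (Finset.mem_Icc.mp hj).1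
    have hj1' : (1 : ℝ) ≤ (j : ℝ) := by exact_mod_cast hj1
    have hp0 : (0 : ℝ) ≤ (p : ℝ) := Nat.cast_nonneg p
    apply div_pos (by linarith) (by linarith)
  induction t, ht using Nat.le_induction with
  | base =>
    simp only [Finset.Icc_self, Finset.sum_singleton, Finset.prod_singleton, Nat.cast_one]
    have hp0 : (0 : ℝ) ≤ (p : ℝ) := Nat.cast_nonneg p
    rw [div_self (by positivity : (1 : ℝ) / (1 + (p : ℝ) + 1) ≠ 0), one_mul, div_pow]
    apply div_le_div_of_nonneg_left (by positivity) (by positivity)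
    calc ((1 : ℝ) + p + 1) ^ p ≤ ((1 : ℝ) + p + 1) ^ (p + 1) := by
          apply pow_le_pow_right₀ (by linarith) (by omega)
      _ = (1 + (p : ℝ) + 1) ^ (p + 1) := by ring
  | succ t ht ih =>
    have hp0 : (0 : ℝ) ≤ (p : ℝ) := Nat.cast_nonneg p
    have ht0 : (0 : ℝ) ≤ (t : ℝ) := Nat.cast_nonneg t
    rw [Finset.sum_Icc_succ_top (by omega : 1 ≤ t + 1)]
    rw [Finset.prod_Icc_succ_top (by omega : 1 ≤ t + 1)]
    set c : ℝ := ((t + 1 : ℕ) : ℝ) / (((t + 1 : ℕ) : ℝ) + p + 1) with hc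
    set Pt : ℝ := ∏ j ∈ Finset.Icc 1 t, ((j : ℝ) / (j + p + 1)) with hPt
    have hc0 : 0 ≤ c := by
      rw [hc]; push_cast; positivity
    have hPtc : Pt * c ≠ 0 := by
      have : 0 < Pt := hPpos t
      have hcp : 0 < c := by rw [hc]; push_cast; positivity
      positivity
    have hsum : ∑ i ∈ Finset.Icc 1 t,
        (Pt * c / (∏ j ∈ Finset.Icc 1 i, ((j : ℝ) / (j + p + 1))))
          * ((p + 1 : ℝ) / (i + p + 1)) ^ (p + 1)
        = c * ∑ i ∈ Finset.Icc 1 t,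
            (Pt / (∏ j ∈ Finset.Icc 1 i, ((j : ℝ) / (j + p + 1))))
              * ((p + 1 : ℝ) / (i + p + 1)) ^ (p + 1) := by
      rw [Finset.mul_sum]
      exact Finset.sum_congr rfl (fun i _ => by ring)
    rw [hsum, div_self hPtc, one_mul]
    have hib := mul_le_mul_of_nonneg_left ih hc0
    have hstep := step_ineq_aux p t
    have hceq : c = ((t : ℝ) + 1) / ((t : ℝ) + p + 2) := by
      rw [hc]; push_cast; ring_nf
    have hgoal2 : ((p + 1 : ℝ) / (((t + 1 : ℕ) : ℝ) + p + 1)) ^ (p + 1)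
        = ((p : ℝ) + 1) ^ (p + 1) / ((t : ℝ) + p + 2) ^ (p + 1) := by
      push_cast
      rw [div_pow]
      ring_nf
    have hB : ((p : ℝ) + 1) ^ (p + 1) / ((t : ℝ) + p + 1) ^ p
        = (p + 1 : ℝ) ^ (p + 1) / ((t : ℝ) + p + 1) ^ p := by norm_num
    calc c * (∑ i ∈ Finset.Icc 1 t,
            (Pt / (∏ j ∈ Finset.Icc 1 i, ((j : ℝ) / (j + p + 1))))
              * ((p + 1 : ℝ) / (i + p + 1)) ^ (p + 1))
          + ((p + 1 : ℝ) / (((t + 1 : ℕ) : ℝ) + p + 1)) ^ (p + 1)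
        ≤ c * ((p + 1 : ℝ) ^ (p + 1) / ((t : ℝ) + p + 1) ^ p)
            + ((p + 1 : ℝ) / (((t + 1 : ℕ) : ℝ) + p + 1)) ^ (p + 1) := by
          linarith [hib]
      _ = ((t : ℝ) + 1) / ((t : ℝ) + p + 2) * (((p : ℝ) + 1) ^ (p + 1) / ((t : ℝ) + p + 1) ^ p)
            + ((p : ℝ) + 1) ^ (p + 1) / ((t : ℝ) + p + 2) ^ (p + 1) := by
          rw [hceq, hgoal2]
      _ ≤ ((p : ℝ) + 1) ^ (p + 1) / ((t : ℝ) + p + 2) ^ p := hstep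
      _ = (p + 1 : ℝ) ^ (p + 1) / (((t + 1 : ℕ) : ℝ) + p + 1) ^ p := by
          push_cast
          ring_nf
end

section
/- For integers 1 ≤ q ≤ p, α_i = (p+1)/(i+p+1) and A_t = Π_{i=1}^t i/(i+p+1), the weighted sum satisfies Σ_{i=1}^t (A_t/A_i)·α_i^{q+1} ≤ (p+1)^{q+1}/(t+p+1)^q. -/
open Finset

lemma prodpos (p i : ℕ) : 0 < ∏ j ∈ Icc 1 i, ((j : ℝ) / (j + p + 1)) := by
  apply Finset.prod_pos
  intro j hj
  have hj1 : 1 ≤ j := (Finset.mem_Icc.mp hj).1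
  have : (0:ℝ) < j := by exact_mod_cast hj1
  positivity

lemma key_ineq (p q t : ℕ) (hqp : q ≤ p) :
    ((t:ℝ)+1) * ((t:ℝ)+p+2)^q ≤ ((t:ℝ)+p+1)^(q+1) := by
  set a : ℝ := (t:ℝ)+p+1 with ha
  have hp0 : (0:ℝ) ≤ p := Nat.cast_nonneg p
  have ht0 : (0:ℝ) ≤ t := Nat.cast_nonneg t
  have ha0 : (0:ℝ) < a := by simp [ha]; linarith
  have ha10 : (0:ℝ) < a + 1 := by linarith
  have hq' : (q:ℝ) ≤ p := by exact_mod_cast hqp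
  have hbern : (1:ℝ) + q * (-(1/(a+1))) ≤ (1 + (-(1/(a+1))))^q := by
    apply one_add_mul_le_pow
    have : 1/(a+1) ≤ 1 := by
      rw [div_le_one ha10]; linarith
    linarith
  have h1 : (1:ℝ) + (-(1/(a+1))) = a/(a+1) := by field_simp; ring
  have hbern' : 1 - (q:ℝ)/(a+1) ≤ (a/(a+1))^q := by
    rw [← h1]
    calc 1 - (q:ℝ)/(a+1) = 1 + q * (-(1/(a+1))) := by ring
      _ ≤ _ := hbern
  have h2 : ((t:ℝ)+1)/a ≤ 1 - (q:ℝ)/(a+1) := by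
    rw [div_le_iff₀ ha0]
    have expand : (1 - (q:ℝ)/(a+1)) * a = (a - (q:ℝ)*a/(a+1)) := by ring
    rw [expand]
    rw [ha]
    have hfrac : (q:ℝ)*((t:ℝ)+p+1)/((t:ℝ)+p+1+1) ≤ (p:ℝ) := by
      rw [div_le_iff₀ (by linarith : (0:ℝ) < (t:ℝ)+p+1+1)]
      nlinarith [mul_nonneg (sub_nonneg.2 hq') (show (0:ℝ) ≤ (t:ℝ)+p+1 by linarith)]
    linarith
  have h4 : ((t:ℝ)+1) ≤ (a/(a+1))^q * a := by
    have := (div_le_iff₀ ha0).1 (h2.trans hbern')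
    linarith
  have h3 : (a/(a+1))^q * (a+1)^q = a^q := by
    rw [div_pow, div_mul_cancel₀]
    positivity
  calc ((t:ℝ)+1) * ((t:ℝ)+p+2)^q = ((t:ℝ)+1) * (a+1)^q := by rw [ha]; ring_nf
    _ ≤ ((a/(a+1))^q * a) * (a+1)^q := by
        apply mul_le_mul_of_nonneg_right h4 (by positivity)
    _ = ((a/(a+1))^q * (a+1)^q) * a := by ring
    _ = a^q * a := by rw [h3]
    _ = a^(q+1) := (pow_succ a q).symm

lemma step_arith (x pr : ℝ) (q : ℕ) (hx : 0 ≤ x) (hp : 0 ≤ pr)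
    (hkey : (x+1) * (x+pr+2)^q ≤ (x+pr+1)^(q+1)) :
    (x+1)/(x+1+pr+1) * ((pr+1)^(q+1)/(x+pr+1)^q) + ((pr+1)/(x+1+pr+1))^(q+1)
      ≤ (pr+1)^(q+1)/(x+1+pr+1)^q := by
  have hD1 : (0:ℝ) < (x+pr+1)^q := by positivity
  have hD2 : (0:ℝ) < (x+pr+2)^q := by positivity
  have hE : (0:ℝ) ≤ (pr+1)^(q+1) := by positivity
  have hx2 : (0:ℝ) < x+pr+2 := by linarith
  set D1 := (x+pr+1)^q with hD1d
  set D2 := (x+pr+2)^q with hD2d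
  set E := (pr+1)^(q+1) with hEd
  have hkey' : (x+1)*D2 + D1 ≤ (x+pr+2)*D1 := by
    have hps : (x+pr+1)^(q+1) = D1*(x+pr+1) := pow_succ _ q
    nlinarith [hkey]
  have heq1 : x+1+pr+1 = x+pr+2 := by ring
  rw [heq1, div_pow]
  have heq2 : (x+pr+2)^(q+1) = D2*(x+pr+2) := pow_succ _ q
  rw [heq2]
  have h6 : E*((x+1)*D2+D1) ≤ E*((x+pr+2)*D1) := mul_le_mul_of_nonneg_left hkey' hE
  have h7 := mul_le_mul_of_nonneg_left h6 (show (0:ℝ) ≤ D2*(x+pr+2) by positivity)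
  rw [div_mul_div_comm, div_add_div _ _ (by positivity) (by positivity),
    div_le_div_iff₀ (by positivity) (by positivity)]
  nlinarith [h7]

theorem weighted_sum_bound_q (p q t : ℕ) (hq : 1 ≤ q) (hqp : q ≤ p) (ht : 1 ≤ t) :
    ∑ i ∈ Finset.Icc 1 t,
        ((∏ j ∈ Finset.Icc 1 t, ((j : ℝ) / (j + p + 1)))
            / (∏ j ∈ Finset.Icc 1 i, ((j : ℝ) / (j + p + 1))))
          * ((p + 1 : ℝ) / (i + p + 1)) ^ (q + 1)
      ≤ (p + 1 : ℝ) ^ (q + 1) / (t + p + 1 : ℝ) ^ q := by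
  induction t, ht using Nat.le_induction with
  | base =>
    simp only [Finset.Icc_self, Finset.sum_singleton, Finset.prod_singleton]
    push_cast
    rw [div_self (by positivity : ((1:ℝ)/(1+(p:ℝ)+1)) ≠ 0), one_mul, div_pow]
    have hle : ((1:ℝ)+(p:ℝ)+1)^q ≤ ((1:ℝ)+(p:ℝ)+1)^(q+1) :=
      pow_le_pow_right₀ (by have : (0:ℝ) ≤ (p:ℝ) := Nat.cast_nonneg p; linarith) (by omega)
    exact div_le_div_of_nonneg_left (by positivity) (by positivity) hle
  | succ t ht IH =>
    have h1 : (1:ℕ) ≤ t + 1 := by omega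
    rw [Finset.sum_Icc_succ_top h1, Finset.prod_Icc_succ_top h1]
    have hPtpos : 0 < ∏ j ∈ Finset.Icc 1 t, ((j : ℝ) / (j + p + 1)) := prodpos p t
    have hcpos : (0:ℝ) < ((t+1:ℕ):ℝ) / (((t+1:ℕ):ℝ) + p + 1) := by
      push_cast; positivity
    rw [div_self (mul_pos hPtpos hcpos).ne', one_mul]
    have hsum : ∑ i ∈ Finset.Icc 1 t,
          ((∏ j ∈ Finset.Icc 1 t, ((j : ℝ) / (j + p + 1))) * (((t+1:ℕ):ℝ) / (((t+1:ℕ):ℝ) + p + 1))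
            / ∏ j ∈ Finset.Icc 1 i, ((j : ℝ) / (j + p + 1))) * ((p + 1 : ℝ) / (i + p + 1)) ^ (q + 1)
        = (((t+1:ℕ):ℝ) / (((t+1:ℕ):ℝ) + p + 1)) * ∑ i ∈ Finset.Icc 1 t,
          ((∏ j ∈ Finset.Icc 1 t, ((j : ℝ) / (j + p + 1)))
            / ∏ j ∈ Finset.Icc 1 i, ((j : ℝ) / (j + p + 1))) * ((p + 1 : ℝ) / (i + p + 1)) ^ (q + 1) := by
      rw [Finset.mul_sum]
      exact Finset.sum_congr rfl fun i _ => by ring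
    rw [hsum]
    have h5 := mul_le_mul_of_nonneg_left IH hcpos.le
    have harith := step_arith (t:ℝ) (p:ℝ) q (Nat.cast_nonneg t) (Nat.cast_nonneg p)
      (key_ineq p q t hqp)
    push_cast at h5 harith ⊢
    linarith [h5, harith]
end

section
/- Under the multi-composite tensor method with α_t = (p+1)/(t+p+1), the iterates satisfy F(x_{t+1}) − F(x*) ≤ E_q (H_q+L_q) R^{q+1}/(t+p+1)^q + E_p (H_p+L_p) R^{p+1}/(t+p+1)^p, where E_k = (p+1)^{k+1}/(k+1)! and R = max_i ‖x_i − x*‖ (bounded by the initial distance on bounded level sets). -/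
private lemma amgm_pow (k : ℕ) : ∀ T : ℝ, (k : ℝ) ≤ T → (T - k) * (T + 1) ^ k ≤ T ^ (k + 1) := by
  induction k with
  | zero => intro T _; simp
  | succ k ih =>
    intro T hT
    have hk : (k : ℝ) ≤ T := by push_cast at hT ⊢; linarith
    have hT0 : (0 : ℝ) ≤ T := le_trans (Nat.cast_nonneg _) hT
    have hpow : (0:ℝ) ≤ (T+1)^k := by positivity
    have h1 : (T - ((k+1 : ℕ) : ℝ)) * (T + 1) ≤ (T - k) * T := by push_cast; nlinarith
    calc (T - ((k+1 : ℕ) : ℝ)) * (T+1) ^ (k+1)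
        = ((T - ((k+1 : ℕ) : ℝ)) * (T+1)) * (T+1)^k := by rw [pow_succ]; ring
      _ ≤ ((T - k) * T) * (T+1)^k := mul_le_mul_of_nonneg_right h1 hpow
      _ = T * ((T - k) * (T+1)^k) := by ring
      _ ≤ T * T^(k+1) := mul_le_mul_of_nonneg_left (ih T hk) hT0
      _ = T^(k+1+1) := by rw [pow_succ]; ring

private lemma frac_step (k : ℕ) (p T : ℝ) (hT : 0 < T) (hkp : (k:ℝ) ≤ p) (hpT : p ≤ T) :
    (T - p) / (T+1) * (1/T^k) + 1/(T+1)^(k+1) ≤ 1/(T+1)^k := by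
  have hkT : (k:ℝ) ≤ T := hkp.trans hpT
  have hS0 : (0:ℝ) < T + 1 := by linarith
  have key : (T - p) * (T+1)^k ≤ T^(k+1) :=
    le_trans (mul_le_mul_of_nonneg_right (by linarith) (by positivity)) (amgm_pow k T hkT)
  have h2 : (1:ℝ)/(T+1)^k - 1/(T+1)^(k+1) = T/(T+1)^(k+1) := by
    rw [pow_succ]
    field_simp
    ring
  have h3 : (T - p)/(T+1) * (1/T^k) ≤ T/(T+1)^(k+1) := by
    rw [div_mul_div_comm, mul_one, div_le_div_iff₀ (by positivity) (by positivity)]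
    calc (T-p)*(T+1)^(k+1) = ((T-p)*(T+1)^k)*(T+1) := by rw [pow_succ]; ring
      _ ≤ T^(k+1)*(T+1) := mul_le_mul_of_nonneg_right key hS0.le
      _ = T*((T+1)*T^k) := by rw [pow_succ]; ring
  linarith

private lemma term_step (k : ℕ) (p T c : ℝ) (hc : 0 ≤ c) (hkp : (k:ℝ) ≤ p) (hpT : p ≤ T)
    (hT : 0 < T) :
    (1 - (p+1)/(T+1)) * (c * (p+1)^(k+1) / T^k) + c * ((p+1)/(T+1))^(k+1)
      ≤ c * (p+1)^(k+1) / (T+1)^k := by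
  have hS0 : (0:ℝ) < T + 1 := by linarith
  have hp0 : (0:ℝ) ≤ p := le_trans (Nat.cast_nonneg k) hkp
  have hfrac := frac_step k p T hT hkp hpT
  have hD : 0 ≤ c * (p+1)^(k+1) := mul_nonneg hc (pow_nonneg (by linarith) _)
  have h1 : 1 - (p+1)/(T+1) = (T-p)/(T+1) := by field_simp; ring
  rw [h1, div_pow]
  have hmul := mul_le_mul_of_nonneg_left hfrac hD
  calc (T-p)/(T+1) * (c * (p+1)^(k+1) / T^k) + c * ((p+1)^(k+1)/(T+1)^(k+1))
      = c * (p+1)^(k+1) * ((T - p) / (T+1) * (1/T^k) + 1/(T+1)^(k+1)) := by ring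
    _ ≤ c * (p+1)^(k+1) * (1/(T+1)^k) := hmul
    _ = c * (p+1)^(k+1) / (T+1)^k := by ring

theorem multi_composite_rate
    {E : Type*} [NormedAddCommGroup E] [NormedSpace ℝ E]
    (F : E → ℝ) (hF : ConvexOn ℝ Set.univ F)
    (xs : E) (hxs : ∀ u, F xs ≤ F u)
    (q p : ℕ) (hq : 1 ≤ q) (hqp : q ≤ p)
    (Lq Lp Hq Hp R : ℝ) (hLq : 0 ≤ Lq) (hLp : 0 ≤ Lp)
    (hHq : (q : ℝ) * Lq ≤ Hq) (hHp : (p : ℝ) * Lp ≤ Hp)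
    (x : ℕ → E) (hR : ∀ i, ‖x i - xs‖ ≤ R)
    (hstep : ∀ t (y : E),
      F (x (t + 1)) ≤ F y + (Hq + Lq) / (q + 1).factorial * ‖y - x t‖ ^ (q + 1)
        + (Hp + Lp) / (p + 1).factorial * ‖y - x t‖ ^ (p + 1))
    (t : ℕ) :
    F (x (t + 1)) - F xs
      ≤ (p + 1 : ℝ) ^ (q + 1) / (q + 1).factorial * (Hq + Lq) * R ^ (q + 1) / (t + p + 1 : ℝ) ^ q
        + (p + 1 : ℝ) ^ (p + 1) / (p + 1).factorial * (Hp + Lp) * R ^ (p + 1)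
            / (t + p + 1 : ℝ) ^ p := by
  have hR0 : (0:ℝ) ≤ R := le_trans (norm_nonneg _) (hR 0)
  have hHq0 : (0:ℝ) ≤ Hq + Lq := by nlinarith [Nat.cast_nonneg (α := ℝ) q]
  have hHp0 : (0:ℝ) ≤ Hp + Lp := by nlinarith [Nat.cast_nonneg (α := ℝ) p]
  have hfq : (0:ℝ) < ((q+1).factorial : ℝ) := by exact_mod_cast Nat.factorial_pos _
  have hfp : (0:ℝ) < ((p+1).factorial : ℝ) := by exact_mod_cast Nat.factorial_pos _
  set cq : ℝ := (Hq + Lq) / ((q+1).factorial : ℝ) with hcq_def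
  set cp : ℝ := (Hp + Lp) / ((p+1).factorial : ℝ) with hcp_def
  have hcq : 0 ≤ cq := div_nonneg hHq0 hfq.le
  have hcp : 0 ≤ cp := div_nonneg hHp0 hfp.le
  set a : ℝ := cq * R^(q+1) with ha_def
  set b : ℝ := cp * R^(p+1) with hb_def
  have ha : 0 ≤ a := mul_nonneg hcq (pow_nonneg hR0 _)
  have hb : 0 ≤ b := mul_nonneg hcp (pow_nonneg hR0 _)
  -- the per-step recurrence
  have hrec : ∀ s : ℕ, F (x (s+1)) - F xs
      ≤ (1 - ((p:ℝ)+1)/((s:ℝ)+p+1)) * (F (x s) - F xs)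
        + a * (((p:ℝ)+1)/((s:ℝ)+p+1))^(q+1) + b * (((p:ℝ)+1)/((s:ℝ)+p+1))^(p+1) := by
    intro s
    set α : ℝ := ((p:ℝ)+1)/((s:ℝ)+p+1) with hα_def
    have hden : (0:ℝ) < (s:ℝ)+p+1 := by positivity
    have hα0 : 0 ≤ α := by positivity
    have hα1 : α ≤ 1 := by
      rw [hα_def, div_le_one hden]
      have : (0:ℝ) ≤ (s:ℝ) := Nat.cast_nonneg s
      linarith
    have hconv := hF.2 (Set.mem_univ xs) (Set.mem_univ (x s)) hα0
      (show (0:ℝ) ≤ 1 - α by linarith) (show α + (1 - α) = 1 by ring)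
    simp only [smul_eq_mul] at hconv
    have hstep' := hstep s (α • xs + (1 - α) • x s)
    have hyx : α • xs + (1-α) • x s - x s = α • (xs - x s) := by
      rw [sub_smul, one_smul, smul_sub]; abel
    have hnorm : ‖α • xs + (1-α) • x s - x s‖ ≤ α * R := by
      rw [hyx, norm_smul, Real.norm_eq_abs, abs_of_nonneg hα0]
      have h' : ‖xs - x s‖ ≤ R := by rw [norm_sub_rev]; exact hR s
      exact mul_le_mul_of_nonneg_left h' hα0
    have hq' : ‖α • xs + (1-α) • x s - x s‖^(q+1) ≤ α^(q+1)*R^(q+1) := by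
      calc ‖α • xs + (1-α) • x s - x s‖^(q+1) ≤ (α*R)^(q+1) :=
            pow_le_pow_left₀ (norm_nonneg _) hnorm _
        _ = α^(q+1)*R^(q+1) := mul_pow α R (q+1)
    have hp' : ‖α • xs + (1-α) • x s - x s‖^(p+1) ≤ α^(p+1)*R^(p+1) := by
      calc ‖α • xs + (1-α) • x s - x s‖^(p+1) ≤ (α*R)^(p+1) :=
            pow_le_pow_left₀ (norm_nonneg _) hnorm _
        _ = α^(p+1)*R^(p+1) := mul_pow α R (p+1)
    have hcq' := mul_le_mul_of_nonneg_left hq' hcq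
    have hcp' := mul_le_mul_of_nonneg_left hp' hcp
    have e1 : a * α^(q+1) = cq * (α^(q+1)*R^(q+1)) := by rw [ha_def]; ring
    have e2 : b * α^(p+1) = cp * (α^(p+1)*R^(p+1)) := by rw [hb_def]; ring
    have e3 : (1 - α) * (F (x s) - F xs) = α * F xs + (1-α) * F (x s) - F xs := by ring
    rw [hcq_def, hcp_def] at hstep'
    linarith
  -- main induction
  have main : ∀ s : ℕ, F (x (s+1)) - F xs
      ≤ a * ((p:ℝ)+1)^(q+1) / ((s:ℝ)+p+1)^q + b * ((p:ℝ)+1)^(p+1) / ((s:ℝ)+p+1)^p := by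
    intro s
    induction s with
    | zero =>
      have h := hrec 0
      have hp1 : ((p:ℝ)+1) ≠ 0 := by positivity
      have hα : ((p:ℝ)+1)/(((0:ℕ):ℝ)+p+1) = 1 := by
        rw [Nat.cast_zero, zero_add]; exact div_self hp1
      rw [hα] at h
      simp only [one_pow, sub_self, zero_mul, mul_one, zero_add] at h
      have e1 : ((p:ℝ)+1)^(q+1)/(((0:ℕ):ℝ)+p+1)^q = (p:ℝ)+1 := by
        rw [Nat.cast_zero, zero_add, pow_succ, mul_comm, mul_div_assoc,
          div_self (pow_ne_zero q hp1), mul_one]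
      have e2 : ((p:ℝ)+1)^(p+1)/(((0:ℕ):ℝ)+p+1)^p = (p:ℝ)+1 := by
        rw [Nat.cast_zero, zero_add, pow_succ, mul_comm, mul_div_assoc,
          div_self (pow_ne_zero p hp1), mul_one]
      rw [mul_div_assoc, mul_div_assoc, e1, e2]
      have hpc : (0:ℝ) ≤ (p:ℝ) := Nat.cast_nonneg p
      nlinarith
    | succ s ih =>
      have h := hrec (s+1)
      push_cast at h ⊢
      have hT0 : (0:ℝ) < (s:ℝ)+p+1 := by positivity
      have hTe : (s:ℝ) + 1 + (p:ℝ) + 1 = ((s:ℝ)+p+1) + 1 := by ring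
      rw [hTe] at h ⊢
      set T : ℝ := (s:ℝ)+p+1 with hT_def
      have hδ : 0 ≤ F (x (s+1)) - F xs := sub_nonneg.2 (hxs _)
      have h1α : 0 ≤ 1 - ((p:ℝ)+1)/(T+1) := by
        rw [sub_nonneg, div_le_one (by linarith)]
        have : (0:ℝ) ≤ (s:ℝ) := Nat.cast_nonneg s
        rw [hT_def]; linarith
      have hmul := mul_le_mul_of_nonneg_left ih h1α
      rw [mul_add] at hmul
      have hq2 := term_step q ((p:ℝ)) T a ha (by exact_mod_cast hqp)
        (by rw [hT_def]; linarith [Nat.cast_nonneg (α := ℝ) s]) hT0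
      have hp2 := term_step p ((p:ℝ)) T b hb le_rfl
        (by rw [hT_def]; linarith [Nat.cast_nonneg (α := ℝ) s]) hT0
      linarith
  calc F (x (t+1)) - F xs
      ≤ a * ((p:ℝ)+1)^(q+1) / ((t:ℝ)+p+1)^q + b * ((p:ℝ)+1)^(p+1) / ((t:ℝ)+p+1)^p := main t
    _ = (p + 1 : ℝ) ^ (q + 1) / (q + 1).factorial * (Hq + Lq) * R ^ (q + 1) / (t + p + 1 : ℝ) ^ q
        + (p + 1 : ℝ) ^ (p + 1) / (p + 1).factorial * (Hp + Lp) * R ^ (p + 1)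
            / (t + p + 1 : ℝ) ^ p := by
        rw [ha_def, hb_def, hcq_def, hcp_def]; ring
end

section
/- With the estimate sequence ψ_k and iterates x_k = argmin ψ_k as above, for any x and any z_k: ψ_{k+1}(x) − A_{k+1}F(y_{k+1}) − (ψ_k(x_k) − A_k F(z_k)) ≥ A_{k+1}⟨∇f(y_{k+1}) + g'(y_{k+1}), (a_{k+1}/A_{k+1})x + (A_k/A_{k+1})z_k − y_{k+1}⟩ + (1/2)‖x − x_k‖². -/
open scoped RealInnerProductSpace

theorem estimate_sequence_step_lower_bound
    {E : Type*} [NormedAddCommGroup E] [InnerProductSpace ℝ E]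
    (f g : E → ℝ) (y1 zk xk : E) (vf vg : E)
    (hf : ∀ z, f y1 + ⟪vf, z - y1⟫ ≤ f z)
    (hg : ∀ z, g y1 + ⟪vg, z - y1⟫ ≤ g z)
    (a Ak A c : ℝ) (ha : 0 < a) (hAk : 0 ≤ Ak) (hA : A = Ak + a)
    (ψk1 : E → ℝ)
    (hψ : ∀ z, ψk1 z = c + 1 / 2 * ‖z - xk‖ ^ 2
        + a * ((f y1 + g y1) + ⟪vf + vg, z - y1⟫))
    (x : E) :
    A * ⟪vf + vg, (a / A) • x + (Ak / A) • zk - y1⟫ + 1 / 2 * ‖x - xk‖ ^ 2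
      ≤ ψk1 x - A * (f y1 + g y1) - (c - Ak * (f zk + g zk)) := by
  have hApos : 0 < A := by rw [hA]; linarith
  have hAne : A ≠ 0 := ne_of_gt hApos
  have key : ⟪vf + vg, zk - y1⟫ ≤ f zk + g zk - (f y1 + g y1) := by
    have h1 := hf zk
    have h2 := hg zk
    rw [inner_add_left]
    linarith
  have expand : A * ⟪vf + vg, (a / A) • x + (Ak / A) • zk - y1⟫
      = a * ⟪vf + vg, x - y1⟫ + Ak * ⟪vf + vg, zk - y1⟫ := by
    simp only [inner_sub_right, inner_add_right, real_inner_smul_right]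
    rw [hA]
    field_simp
    ring
  rw [hψ, expand]
  subst hA
  nlinarith [mul_le_mul_of_nonneg_left key hAk]
end

section
/- Let λ_{k+1} = a_{k+1}²/A_{k+1} and x̃_k = (a_{k+1}/A_{k+1})x_k + (A_k/A_{k+1})y_k. Then ψ_{k+1}(x_{k+1}) − A_{k+1}F(y_{k+1}) − (ψ_k(x_k) − A_k F(y_k)) ≥ (A_{k+1}/(2λ_{k+1}))·(‖y_{k+1} − x̃_k‖² − ‖y_{k+1} − (x̃_k − λ_{k+1}(∇f(y_{k+1}) + g'(y_{k+1})))‖²). Consequently, if each step satisfies ‖y_{k+1} − (x̃_k − λ_{k+1}(∇f(y_{k+1})+g'(y_{k+1})))‖ ≤ σ‖y_{k+1} − x̃_k‖ with σ ∈ [0,1], then ψ_k(x_k) − A_k F(y_k) ≥ ((1−σ²)/2) Σ_{i=1}^k (A_i/λ_i)‖y_i − x̃_{i−1}‖². -/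
open scoped RealInnerProductSpace

lemma esp_norm_add_smul_sq {E : Type*} [NormedAddCommGroup E] [InnerProductSpace ℝ E]
    (u v : E) (c : ℝ) :
    ‖u + c • v‖^2 = ‖u‖^2 + 2*c*⟪v, u⟫ + c^2*‖v‖^2 := by
  rw [norm_add_sq_real, real_inner_smul_right, norm_smul, Real.norm_eq_abs, mul_pow, sq_abs,
    real_inner_comm u v]
  ring

theorem estimate_sequence_potential_decrease
    {E : Type*} [NormedAddCommGroup E] [InnerProductSpace ℝ E]
    (f g : E → ℝ) (x0 : E) (y : ℕ → E) (Gf Gg : ℕ → E)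
    (hf : ∀ k z, f (y k) + ⟪Gf k, z - y k⟫ ≤ f z)
    (hg : ∀ k z, g (y k) + ⟪Gg k, z - y k⟫ ≤ g z)
    (a : ℕ → ℝ) (ha : ∀ k, 1 ≤ k → 0 < a k)
    (A lam : ℕ → ℝ)
    (hA : ∀ k, A k = ∑ i ∈ Finset.Icc 1 k, a i)
    (hlam : ∀ k, 1 ≤ k → lam k = (a k) ^ 2 / A k)
    (x : ℕ → E) (hx : ∀ k, x k = x0 - ∑ i ∈ Finset.Icc 1 k, a i • (Gf i + Gg i))
    (xt : ℕ → E)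
    (hxt : ∀ k, xt k = (a (k + 1) / A (k + 1)) • x k + (A k / A (k + 1)) • y k)
    (ψ : ℕ → E → ℝ)
    (hψ0 : ∀ z, ψ 0 z = 1 / 2 * ‖z - x0‖ ^ 2)
    (hψ : ∀ k z, ψ (k + 1) z = ψ k z + a (k + 1) *
        ((f (y (k + 1)) + g (y (k + 1))) + ⟪Gf (k + 1) + Gg (k + 1), z - y (k + 1)⟫))
    (σ : ℝ) (hσ : σ ∈ Set.Icc (0 : ℝ) 1) :
    (∀ k, A (k + 1) / (2 * lam (k + 1)) *
        (‖y (k + 1) - xt k‖ ^ 2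
          - ‖y (k + 1) - (xt k - lam (k + 1) • (Gf (k + 1) + Gg (k + 1)))‖ ^ 2)
      ≤ ψ (k + 1) (x (k + 1)) - A (k + 1) * (f (y (k + 1)) + g (y (k + 1)))
          - (ψ k (x k) - A k * (f (y k) + g (y k))))
    ∧ ((∀ k, ‖y (k + 1) - (xt k - lam (k + 1) • (Gf (k + 1) + Gg (k + 1)))‖
          ≤ σ * ‖y (k + 1) - xt k‖)
      → ∀ k, (1 - σ ^ 2) / 2 * ∑ i ∈ Finset.Icc 1 k, A i / lam i * ‖y i - xt (i - 1)‖ ^ 2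
          ≤ ψ k (x k) - A k * (f (y k) + g (y k))) := by
  -- basic facts about A
  have hA0 : A 0 = 0 := by rw [hA]; simp
  have hArec : ∀ k, A (k + 1) = A k + a (k + 1) := by
    intro k
    rw [hA, hA, Finset.sum_Icc_succ_top (by omega : 1 ≤ k + 1)]
  have hAnn : ∀ k, 0 ≤ A k := by
    intro k
    rw [hA]
    exact Finset.sum_nonneg fun i hi => (ha i (Finset.mem_Icc.mp hi).1).le
  have hApos : ∀ k, 0 < A (k + 1) := by
    intro k
    rw [hArec k]
    have := ha (k + 1) (by omega)
    have := hAnn k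
    linarith
  have hlampos : ∀ k, 0 < lam (k + 1) := by
    intro k
    rw [hlam (k + 1) (by omega)]
    exact div_pos (pow_pos (ha (k + 1) (by omega)) 2) (hApos k)
  -- recursion for x
  have hxrec : ∀ k, x (k + 1) = x k - a (k + 1) • (Gf (k + 1) + Gg (k + 1)) := by
    intro k
    rw [hx, hx, Finset.sum_Icc_succ_top (by omega : 1 ≤ k + 1)]
    abel
  -- x k is the minimizer of the quadratic ψ k
  have hquad : ∀ k z, ψ k z = ψ k (x k) + 1 / 2 * ‖z - x k‖ ^ 2 := by
    intro k
    induction k with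
    | zero =>
      intro z
      have hx0 : x 0 = x0 := by rw [hx]; simp
      rw [hψ0, hψ0, hx0]
      simp
    | succ k ih =>
      intro z
      have e1 : z - x (k + 1) = (z - x k) + a (k + 1) • (Gf (k + 1) + Gg (k + 1)) := by
        rw [hxrec k]; abel
      have e2 : x (k + 1) - x k = -(a (k + 1) • (Gf (k + 1) + Gg (k + 1))) := by
        rw [hxrec k]; abel
      have h1 : ‖z - x (k + 1)‖ ^ 2 = ‖z - x k‖ ^ 2
          + 2 * a (k + 1) * (⟪Gf (k + 1) + Gg (k + 1), z⟫ - ⟪Gf (k + 1) + Gg (k + 1), x k⟫)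
          + (a (k + 1)) ^ 2 * ‖Gf (k + 1) + Gg (k + 1)‖ ^ 2 := by
        rw [e1, esp_norm_add_smul_sq, inner_sub_right]
      have h2 : ‖x (k + 1) - x k‖ ^ 2 = (a (k + 1)) ^ 2 * ‖Gf (k + 1) + Gg (k + 1)‖ ^ 2 := by
        rw [e2, norm_neg, norm_smul, Real.norm_eq_abs, mul_pow, sq_abs]
      have h3 : ⟪Gf (k + 1) + Gg (k + 1), x (k + 1) - y (k + 1)⟫
          = ⟪Gf (k + 1) + Gg (k + 1), x k⟫ - a (k + 1) * ‖Gf (k + 1) + Gg (k + 1)‖ ^ 2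
            - ⟪Gf (k + 1) + Gg (k + 1), y (k + 1)⟫ := by
        rw [hxrec k]
        rw [sub_sub, inner_sub_right, inner_add_right, real_inner_smul_right,
          real_inner_self_eq_norm_sq]
        ring
      have h4 : ⟪Gf (k + 1) + Gg (k + 1), z - y (k + 1)⟫
          = ⟪Gf (k + 1) + Gg (k + 1), z⟫ - ⟪Gf (k + 1) + Gg (k + 1), y (k + 1)⟫ :=
        inner_sub_right _ _ _
      rw [hψ, hψ, ih z, ih (x (k + 1)), h1, h2, h3, h4]
      ring
  -- the main per-step inequality
  have part1 : ∀ k, A (k + 1) / (2 * lam (k + 1)) *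
        (‖y (k + 1) - xt k‖ ^ 2
          - ‖y (k + 1) - (xt k - lam (k + 1) • (Gf (k + 1) + Gg (k + 1)))‖ ^ 2)
      ≤ ψ (k + 1) (x (k + 1)) - A (k + 1) * (f (y (k + 1)) + g (y (k + 1)))
          - (ψ k (x k) - A k * (f (y k) + g (y k))) := by
    intro k
    set v : E := Gf (k + 1) + Gg (k + 1) with hv
    have hL : lam (k + 1) = (a (k + 1)) ^ 2 / A (k + 1) := hlam (k + 1) (by omega)
    have hA1 : (0:ℝ) < A (k + 1) := hApos k
    have ha1 : (0:ℝ) < a (k + 1) := ha (k + 1) (by omega)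
    have hLpos : 0 < lam (k + 1) := hlampos k
    -- expand the left norm difference
    have e1 : y (k + 1) - (xt k - lam (k + 1) • v) = (y (k + 1) - xt k) + lam (k + 1) • v := by
      abel
    have h1 : ‖y (k + 1) - (xt k - lam (k + 1) • v)‖ ^ 2
        = ‖y (k + 1) - xt k‖ ^ 2 + 2 * lam (k + 1) * ⟪v, y (k + 1) - xt k⟫
          + (lam (k + 1)) ^ 2 * ‖v‖ ^ 2 := by
      rw [e1, esp_norm_add_smul_sq]
    have h2 : ⟪v, y (k + 1) - xt k⟫ = ⟪v, y (k + 1)⟫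
        - ((a (k + 1) / A (k + 1)) * ⟪v, x k⟫ + (A k / A (k + 1)) * ⟪v, y k⟫) := by
      rw [inner_sub_right, hxt k, inner_add_right, real_inner_smul_right, real_inner_smul_right]
    -- value of the new potential
    have h3 : ψ (k + 1) (x (k + 1)) = ψ k (x k) + 1 / 2 * (a (k + 1))^2 * ‖v‖ ^ 2
        + a (k + 1) * ((f (y (k + 1)) + g (y (k + 1)))
          + (⟪v, x k⟫ - a (k + 1) * ‖v‖ ^ 2 - ⟪v, y (k + 1)⟫)) := by
      have h3a : ⟪v, x (k + 1) - y (k + 1)⟫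
          = ⟪v, x k⟫ - a (k + 1) * ‖v‖ ^ 2 - ⟪v, y (k + 1)⟫ := by
        rw [hxrec k, sub_sub, inner_sub_right, inner_add_right, real_inner_smul_right,
          real_inner_self_eq_norm_sq]
        ring
      have h3b : ‖x (k + 1) - x k‖ ^ 2 = (a (k + 1)) ^ 2 * ‖v‖ ^ 2 := by
        have e2 : x (k + 1) - x k = -(a (k + 1) • v) := by rw [hxrec k]; abel
        rw [e2, norm_neg, norm_smul, Real.norm_eq_abs, mul_pow, sq_abs]
      rw [hψ, hquad k (x (k + 1)), h3a, h3b]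
      ring
    -- the subgradient inequality at y k
    have hsub : (f (y (k + 1)) + g (y (k + 1))) + (⟪v, y k⟫ - ⟪v, y (k + 1)⟫)
        ≤ f (y k) + g (y k) := by
      have h5 : ⟪v, y k - y (k + 1)⟫ = ⟪v, y k⟫ - ⟪v, y (k + 1)⟫ := inner_sub_right _ _ _
      have h6 := hf (k + 1) (y k)
      have h7 := hg (k + 1) (y k)
      have h8 : ⟪v, y k - y (k + 1)⟫
          = ⟪Gf (k + 1), y k - y (k + 1)⟫ + ⟪Gg (k + 1), y k - y (k + 1)⟫ := by
        rw [hv, inner_add_left]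
      rw [← h5, h8]
      linarith
    have hmul := mul_le_mul_of_nonneg_left hsub (hAnn k)
    have hA1ne : A (k + 1) ≠ 0 := ne_of_gt hA1
    have ha1ne : a (k + 1) ≠ 0 := ne_of_gt ha1
    -- closed form for the left-hand side
    have hLHS : A (k + 1) / (2 * lam (k + 1)) *
        (‖y (k + 1) - xt k‖ ^ 2 - ‖y (k + 1) - (xt k - lam (k + 1) • v)‖ ^ 2)
        = -(A (k + 1) * ⟪v, y (k + 1) - xt k⟫) - (a (k + 1)) ^ 2 / 2 * ‖v‖ ^ 2 := by
      rw [h1, hL]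
      field_simp
      ring
    have hw : ⟪v, y (k + 1) - xt k⟫ = ⟪v, y (k + 1)⟫ - ⟪v, xt k⟫ := inner_sub_right _ _ _
    have hXT : A (k + 1) * ⟪v, xt k⟫ = a (k + 1) * ⟪v, x k⟫ + A k * ⟪v, y k⟫ := by
      rw [hxt k, inner_add_right, real_inner_smul_right, real_inner_smul_right]
      field_simp
    rw [hLHS, hw, h3, hArec k]
    rw [hArec k] at hXT
    nlinarith [hmul, hXT]
  refine ⟨part1, ?_⟩
  intro h k
  induction k with
  | zero =>
    have hx0 : x 0 = x0 := by rw [hx]; simp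
    rw [hA0, hψ0, hx0]
    simp
  | succ k ih =>
    have hσ0 := hσ.1
    have hσ1 := hσ.2
    -- bound the per-step gain from below
    have hb : ‖y (k + 1) - (xt k - lam (k + 1) • (Gf (k + 1) + Gg (k + 1)))‖ ^ 2
        ≤ σ ^ 2 * ‖y (k + 1) - xt k‖ ^ 2 := by
      have := pow_le_pow_left₀ (norm_nonneg _) (h k) 2
      calc ‖y (k + 1) - (xt k - lam (k + 1) • (Gf (k + 1) + Gg (k + 1)))‖ ^ 2
          ≤ (σ * ‖y (k + 1) - xt k‖) ^ 2 := this
        _ = σ ^ 2 * ‖y (k + 1) - xt k‖ ^ 2 := by ring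
    have hcoef : 0 ≤ A (k + 1) / (2 * lam (k + 1)) := by
      have := hApos k; have := hlampos k; positivity
    have hstep : (1 - σ ^ 2) / 2 * (A (k + 1) / lam (k + 1) * ‖y (k + 1) - xt k‖ ^ 2)
        ≤ ψ (k + 1) (x (k + 1)) - A (k + 1) * (f (y (k + 1)) + g (y (k + 1)))
          - (ψ k (x k) - A k * (f (y k) + g (y k))) := by
      refine le_trans ?_ (part1 k)
      have key : (1 - σ ^ 2) * ‖y (k + 1) - xt k‖ ^ 2
          ≤ ‖y (k + 1) - xt k‖ ^ 2
            - ‖y (k + 1) - (xt k - lam (k + 1) • (Gf (k + 1) + Gg (k + 1)))‖ ^ 2 := by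
        nlinarith [hb]
      have := mul_le_mul_of_nonneg_left key hcoef
      calc (1 - σ ^ 2) / 2 * (A (k + 1) / lam (k + 1) * ‖y (k + 1) - xt k‖ ^ 2)
          = A (k + 1) / (2 * lam (k + 1)) * ((1 - σ ^ 2) * ‖y (k + 1) - xt k‖ ^ 2) := by
            ring
        _ ≤ _ := this
    have hsum : ∑ i ∈ Finset.Icc 1 (k + 1), A i / lam i * ‖y i - xt (i - 1)‖ ^ 2
        = (∑ i ∈ Finset.Icc 1 k, A i / lam i * ‖y i - xt (i - 1)‖ ^ 2)
          + A (k + 1) / lam (k + 1) * ‖y (k + 1) - xt k‖ ^ 2 := by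
      rw [Finset.sum_Icc_succ_top (by omega : 1 ≤ k + 1)]
      norm_num
    rw [hsum]
    have : (1 - σ ^ 2) / 2 * ((∑ i ∈ Finset.Icc 1 k, A i / lam i * ‖y i - xt (i - 1)‖ ^ 2)
        + A (k + 1) / lam (k + 1) * ‖y (k + 1) - xt k‖ ^ 2)
        = (1 - σ ^ 2) / 2 * (∑ i ∈ Finset.Icc 1 k, A i / lam i * ‖y i - xt (i - 1)‖ ^ 2)
          + (1 - σ ^ 2) / 2 * (A (k + 1) / lam (k + 1) * ‖y (k + 1) - xt k‖ ^ 2) := by ring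
    rw [this]
    linarith
end

section
/- Suppose y_{k+1} exactly minimizes y ↦ Ω_p(f, x̃_k; y) + (L_p(p+1)/(p+1)!)‖y − x̃_k‖^{p+1} + g(y) and the step size λ_{k+1} satisfies 1/2 ≤ λ_{k+1}·L_p‖y_{k+1} − x̃_k‖^{p−1}/(p−1)! ≤ p/(p+1). Then ‖y_{k+1} − (x̃_k − λ_{k+1}(∇f(y_{k+1}) + g'(y_{k+1})))‖ ≤ (1/2)‖y_{k+1} − x̃_k‖. -/
theorem exact_tensor_step_contraction
    {E : Type*} [NormedAddCommGroup E] [InnerProductSpace ℝ E]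
    (p : ℕ) (hp : 1 ≤ p) (Lp lam : ℝ) (hLp : 0 < Lp)
    (xt y1 vf vg gΩ : E)
    (htaylor : ‖vf - gΩ‖ ≤ Lp / p.factorial * ‖y1 - xt‖ ^ p)
    (hopt : gΩ + (Lp * (p + 1) / p.factorial * ‖y1 - xt‖ ^ (p - 1)) • (y1 - xt) + vg = 0)
    (hstep1 : 1 / 2 ≤ lam * Lp * ‖y1 - xt‖ ^ (p - 1) / (p - 1).factorial)
    (hstep2 : lam * Lp * ‖y1 - xt‖ ^ (p - 1) / (p - 1).factorial ≤ (p : ℝ) / (p + 1)) :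
    ‖y1 - (xt - lam • (vf + vg))‖ ≤ 1 / 2 * ‖y1 - xt‖ := by
  set s := ‖y1 - xt‖ with hsdef
  set c : ℝ := Lp * (p + 1) / p.factorial * s ^ (p - 1) with hc
  set T : ℝ := lam * Lp * s ^ (p - 1) / (p - 1).factorial with hT
  have hs0 : 0 ≤ s := hsdef ▸ norm_nonneg _
  clear_value s
  have hF0 : (0:ℝ) < (p - 1).factorial := by exact_mod_cast Nat.factorial_pos _
  have hp1 : (1:ℝ) ≤ (p:ℝ) := by exact_mod_cast hp
  have hp0 : (0:ℝ) < (p:ℝ) := by linarith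
  have hfacn : p.factorial = p * (p - 1).factorial := by
    cases p with
    | zero => omega
    | succ n => simp [Nat.factorial_succ]
  have hfac : (p.factorial : ℝ) = (p : ℝ) * (p - 1).factorial := by exact_mod_cast hfacn
  have hTpos : (0:ℝ) < T := lt_of_lt_of_le (by norm_num) hstep1
  have hspow : 0 < s ^ (p - 1) := by
    rcases lt_or_ge 0 (s ^ (p - 1)) with h | h
    · exact h
    · exfalso
      have hs' : s ^ (p - 1) = 0 := le_antisymm h (pow_nonneg hs0 _)
      rw [hT, hs'] at hTpos
      simp at hTpos
  have hlam : 0 < lam := by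
    by_contra h
    push_neg at h
    have h2 : lam * (Lp * s ^ (p - 1)) ≤ 0 :=
      mul_nonpos_of_nonpos_of_nonneg h (mul_pos hLp hspow).le
    have h3 : T ≤ 0 := by
      rw [hT]
      apply div_nonpos_of_nonpos_of_nonneg
      · nlinarith
      · positivity
    linarith
  have hsp : s ^ p = s ^ (p - 1) * s := by
    rw [← pow_succ]
    congr 1
    omega
  have hvg : vg = -(gΩ + c • (y1 - xt)) := by rw [eq_neg_iff_add_eq_zero, add_comm]; exact hopt
  have hvec : y1 - (xt - lam • (vf + vg)) =
      (1 - lam * c) • (y1 - xt) + lam • (vf - gΩ) := by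
    rw [hvg]
    module
  rw [hvec]
  have hlc : lam * c = T * ((p : ℝ) + 1) / p := by
    rw [hc, hT, hfac]
    field_simp
  have hlc1 : lam * c ≤ 1 := by
    rw [hlc, div_le_one hp0]
    have := (le_div_iff₀ (by linarith : (0:ℝ) < (p:ℝ) + 1)).mp hstep2
    linarith
  calc ‖(1 - lam * c) • (y1 - xt) + lam • (vf - gΩ)‖
      ≤ ‖(1 - lam * c) • (y1 - xt)‖ + ‖lam • (vf - gΩ)‖ := norm_add_le _ _
    _ = |1 - lam * c| * s + |lam| * ‖vf - gΩ‖ := by rw [norm_smul, norm_smul, hsdef]; simp [Real.norm_eq_abs]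
    _ ≤ (1 - lam * c) * s + lam * (Lp / p.factorial * s ^ p) := by
        rw [abs_of_nonneg (by linarith), abs_of_nonneg hlam.le]
        have := mul_le_mul_of_nonneg_left htaylor hlam.le
        linarith
    _ ≤ 1 / 2 * s := by
        have h1 : lam * (Lp / p.factorial * s ^ p) = T * s / p := by
          rw [hT, hfac, hsp]
          field_simp
        have key : (1 - lam * c) * s + T * s / p = (1 - T) * s := by
          rw [hlc]
          field_simp
          ring
        rw [h1, key]
        nlinarith
end

section
/- Suppose ỹ_{k+1} is an inexact solution of the regularized Taylor subproblem with gradient residual Ξ_{k+1} = ∇(Ω_p(f,x̃_k;·) + (L_p/p!)‖·−x̃_k‖^{p+1} + g)(ỹ_{k+1}) satisfying ‖Ξ_{k+1}‖ ≤ (L_p/(2p!))‖ỹ_{k+1} − x̃_k‖^p, and 1/2 ≤ λ_{k+1}·L_p‖ỹ_{k+1} − x̃_k‖^{p−1}/(p−1)! ≤ p/(p+1). Then ‖ỹ_{k+1} − (x̃_k − λ_{k+1}(∇f(ỹ_{k+1}) + g'(ỹ_{k+1})))‖ ≤ (3/4)‖ỹ_{k+1} − x̃_k‖. -/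
set_option maxHeartbeats 1000000 in
theorem inexact_tensor_step_contraction
    {E : Type*} [NormedAddCommGroup E] [InnerProductSpace ℝ E]
    (p : ℕ) (hp : 1 ≤ p) (Lp lam : ℝ) (hLp : 0 < Lp)
    (xt y1 vf vg gΩ Ξ : E)
    (htaylor : ‖vf - gΩ‖ ≤ Lp / p.factorial * ‖y1 - xt‖ ^ p)
    (hopt : gΩ + (Lp * (p + 1) / p.factorial * ‖y1 - xt‖ ^ (p - 1)) • (y1 - xt) + vg = Ξ)
    (hΞ : ‖Ξ‖ ≤ Lp / (2 * p.factorial) * ‖y1 - xt‖ ^ p)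
    (hstep1 : 1 / 2 ≤ lam * Lp * ‖y1 - xt‖ ^ (p - 1) / (p - 1).factorial)
    (hstep2 : lam * Lp * ‖y1 - xt‖ ^ (p - 1) / (p - 1).factorial ≤ (p : ℝ) / (p + 1)) :
    ‖y1 - (xt - lam • (vf + vg))‖ ≤ 3 / 4 * ‖y1 - xt‖ := by
  set r : ℝ := ‖y1 - xt‖ with hrdef
  have hr : 0 ≤ r := norm_nonneg _
  have hfac1 : (0:ℝ) < (p - 1).factorial := by exact_mod_cast (p-1).factorial_pos
  have hpfac : (p.factorial : ℝ) = p * (p - 1).factorial := by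
    have : p = (p - 1) + 1 := (Nat.succ_pred_eq_of_pos hp).symm
    rw [this, Nat.factorial_succ]
    push_cast [Nat.succ_pred_eq_of_pos hp]
    ring
  have hpR : (1:ℝ) ≤ (p : ℝ) := by exact_mod_cast hp
  have hpR0 : (0:ℝ) < (p : ℝ) := by linarith
  set η : ℝ := lam * Lp * r ^ (p - 1) / (p - 1).factorial with hηdef
  have hη1 : 1 / 2 ≤ η := hstep1
  have hη2 : η ≤ (p : ℝ) / (p + 1) := hstep2
  have hs : 0 ≤ r ^ (p - 1) := pow_nonneg hr _
  have hlam : 0 ≤ lam := by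
    by_contra h
    push_neg at h
    have : lam * Lp * r ^ (p - 1) ≤ 0 := by
      have := mul_nonneg hLp.le hs
      nlinarith
    have : η ≤ 0 := div_nonpos_of_nonpos_of_nonneg this hfac1.le
    linarith
  have hrp : r ^ p = r ^ (p - 1) * r := by
    conv_lhs => rw [show p = (p - 1) + 1 from (Nat.succ_pred_eq_of_pos hp).symm]
    rw [pow_succ]
  set c : ℝ := Lp * (p + 1) / p.factorial * r ^ (p - 1) with hcdef
  have hvg : vg = Ξ - gΩ - c • (y1 - xt) := by
    rw [← hopt]; abel
  have hid : y1 - (xt - lam • (vf + vg))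
      = (1 - lam * c) • (y1 - xt) + (lam • (vf - gΩ) + lam • Ξ) := by
    rw [hvg]; module
  have hbound : ‖y1 - (xt - lam • (vf + vg))‖
      ≤ |1 - lam * c| * r + lam * ‖vf - gΩ‖ + lam * ‖Ξ‖ := by
    rw [hid]
    calc ‖(1 - lam * c) • (y1 - xt) + (lam • (vf - gΩ) + lam • Ξ)‖
        ≤ ‖(1 - lam * c) • (y1 - xt)‖ + (‖lam • (vf - gΩ)‖ + ‖lam • Ξ‖) :=
          (norm_add_le _ _).trans (by gcongr; exact norm_add_le _ _)
      _ = |1 - lam * c| * r + (|lam| * ‖vf - gΩ‖ + |lam| * ‖Ξ‖) := by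
          rw [norm_smul, norm_smul, norm_smul, Real.norm_eq_abs, Real.norm_eq_abs]
      _ = |1 - lam * c| * r + lam * ‖vf - gΩ‖ + lam * ‖Ξ‖ := by
          rw [abs_of_nonneg hlam]; ring
  -- express lam * c in terms of η
  have hfacp0 : (0:ℝ) < (p.factorial : ℝ) := by exact_mod_cast p.factorial_pos
  have hlc : lam * c = η * (p + 1) / p := by
    rw [hcdef, hηdef, hpfac]
    field_simp
  have hlc1 : lam * c ≤ 1 := by
    rw [hlc]
    rw [div_le_one hpR0]
    have hp1 : (0:ℝ) < (p:ℝ) + 1 := by linarith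
    calc η * ((p:ℝ) + 1) ≤ ((p:ℝ) / (p + 1)) * ((p:ℝ)+1) := by nlinarith
      _ = p := by field_simp
  have habs : |1 - lam * c| = 1 - lam * c := abs_of_nonneg (by linarith)
  -- bound the other terms
  have ht : lam * ‖vf - gΩ‖ ≤ η / p * r := by
    calc lam * ‖vf - gΩ‖ ≤ lam * (Lp / p.factorial * r ^ p) := by
          exact mul_le_mul_of_nonneg_left htaylor hlam
      _ = η / p * r := by
          rw [hηdef, hpfac, hrp]; field_simp
  have hx : lam * ‖Ξ‖ ≤ η / (2 * p) * r := by
    calc lam * ‖Ξ‖ ≤ lam * (Lp / (2 * p.factorial) * r ^ p) := by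
          exact mul_le_mul_of_nonneg_left hΞ hlam
      _ = η / (2 * p) * r := by
          rw [hηdef, hpfac, hrp]; field_simp
  clear_value r η c
  have hfinal : (1 - lam * c) * r + η / p * r + η / (2 * p) * r ≤ 3 / 4 * r := by
    rw [hlc]
    have hne : (p:ℝ) ≠ 0 := ne_of_gt hpR0
    have key : (1 - η * ((p:ℝ) + 1) / p) + η / p + η / (2 * p) ≤ 3 / 4 := by
      have h2 : 0 < 2 * (p:ℝ) := by positivity
      rw [← sub_nonneg]
      have e : 3 / 4 - ((1 - η * ((p:ℝ) + 1) / p) + η / p + η / (2 * p))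
          = (2 * η * (p:ℝ) - η - (p:ℝ) / 2) / (2 * (p:ℝ)) := by
        field_simp
        ring
      rw [e]
      apply div_nonneg _ h2.le
      nlinarith [hη1, hpR]
    calc (1 - η * ((p:ℝ) + 1) / p) * r + η / p * r + η / (2 * p) * r
        = ((1 - η * ((p:ℝ) + 1) / p) + η / p + η / (2 * p)) * r := by ring
      _ ≤ 3 / 4 * r := mul_le_mul_of_nonneg_right key hr
  calc ‖y1 - (xt - lam • (vf + vg))‖
      ≤ |1 - lam * c| * r + lam * ‖vf - gΩ‖ + lam * ‖Ξ‖ := hbound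
    _ ≤ (1 - lam * c) * r + η / p * r + η / (2 * p) * r := by
        rw [habs]; linarith [ht, hx]
    _ ≤ 3 / 4 * r := hfinal
end

section
/- If the restart radii satisfy R_{k+1} ≤ (r c_p L_p R_k^{p+1} / (σ_r N_k^{(3p+1)/2}))^{1/r} with N_k ≥ (r c_p L_p 2^r R_k^{p+1−r}/σ_r)^{2/(3p+1)}, then R_{k+1} ≤ R_k/2; i.e. the distance to the minimizer halves at each restart. -/
theorem restart_radius_halves
    (p r σr cp Lp Rk Rk1 Nk : ℝ)
    (hp : 1 ≤ p) (hr : 2 ≤ r) (hrp : r ≤ p + 1)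
    (hσ : 0 < σr) (hcp : 0 < cp) (hLp : 0 < Lp) (hRk : 0 < Rk) (hNk : 0 < Nk)
    (hN : (r * cp * Lp * 2 ^ r * Rk ^ (p + 1 - r) / σr) ^ (2 / (3 * p + 1)) ≤ Nk)
    (hR : Rk1 ≤ (r * cp * Lp * Rk ^ (p + 1) / (σr * Nk ^ ((3 * p + 1) / 2))) ^ (1 / r)) :
    Rk1 ≤ Rk / 2 := by
  have hr0 : (0:ℝ) < r := by linarith
  have h3p : (0:ℝ) < 3 * p + 1 := by linarith
  have h2r : (0:ℝ) < (2:ℝ) ^ r := Real.rpow_pos_of_pos two_pos r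
  have hRkr : (0:ℝ) < Rk ^ (p + 1 - r) := Real.rpow_pos_of_pos hRk _
  set B : ℝ := r * cp * Lp * 2 ^ r * Rk ^ (p + 1 - r) / σr with hBdef
  have hB : 0 < B := by positivity
  have hNpow : B ≤ Nk ^ ((3 * p + 1) / 2) := by
    have h1 : B = (B ^ (2 / (3 * p + 1))) ^ ((3 * p + 1) / 2) := by
      rw [← Real.rpow_mul hB.le]
      rw [show 2 / (3 * p + 1) * ((3 * p + 1) / 2) = 1 by field_simp]
      rw [Real.rpow_one]
    rw [h1]
    exact Real.rpow_le_rpow (Real.rpow_nonneg hB.le _) hN (by positivity)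
  have hNkpow : (0:ℝ) < Nk ^ ((3 * p + 1) / 2) := Real.rpow_pos_of_pos hNk _
  have key : r * cp * Lp * Rk ^ (p + 1) / (σr * Nk ^ ((3 * p + 1) / 2)) ≤ (Rk / 2) ^ r := by
    rw [div_le_iff₀ (by positivity)]
    have hσB : r * cp * Lp * 2 ^ r * Rk ^ (p + 1 - r) ≤ σr * Nk ^ ((3 * p + 1) / 2) := by
      have := mul_le_mul_of_nonneg_left hNpow hσ.le
      rwa [hBdef, mul_div_cancel₀ _ (ne_of_gt hσ)] at this
    have hstep : (Rk / 2) ^ r * (r * cp * Lp * 2 ^ r * Rk ^ (p + 1 - r))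
        ≤ (Rk / 2) ^ r * (σr * Nk ^ ((3 * p + 1) / 2)) :=
      mul_le_mul_of_nonneg_left hσB (Real.rpow_nonneg (by positivity) r)
    refine le_trans (le_of_eq ?_) hstep
    rw [Real.div_rpow hRk.le (by norm_num)]
    have hsplit : Rk ^ (p + 1) = Rk ^ r * Rk ^ (p + 1 - r) := by
      rw [← Real.rpow_add hRk]; ring_nf
    rw [hsplit]
    field_simp
  calc Rk1 ≤ (r * cp * Lp * Rk ^ (p + 1) / (σr * Nk ^ ((3 * p + 1) / 2))) ^ (1 / r) := hR
    _ ≤ ((Rk / 2) ^ r) ^ (1 / r) :=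
        Real.rpow_le_rpow (by positivity) key (by positivity)
    _ = Rk / 2 := by
        rw [← Real.rpow_mul (by positivity), mul_one_div, div_self (ne_of_gt hr0),
          Real.rpow_one]
end
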